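/- arXiv:1809.01128 — 2 statements merged into one kernel-verified Lean document; each statement's English description precedes it below -/
import Mathlib

section
/- Let G1 and G2 be connected simple graphs on disjoint vertex sets with |V(Gi)| ≥ 2 and mi = |E(Gi)| ≥ 1 for i = 1,2, and let u1 ∈ V(G1), u2 ∈ V(G2). Let G be the connected graph obtained by identifying u1 with u2 into a single vertex u (so E(G) is the disjoint union of E(G1) and E(G2)). Then W_e(G) = W_e(G1) + W_e(G2) + m1·Σ_{f ∈ E(G2)} d_G(f,u) + m2·Σ_{g ∈ E(G1)} d_G(g,u) + m1·m2. -/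
open SimpleGraph Finset
open scoped Classical

/-- The distance `d_G(f,g)` between two edges: `0` if they coincide, otherwise the minimum
distance between endpoints plus one (i.e. the distance in the line graph). -/
noncomputable def eDist {V : Type*} (G : SimpleGraph V) (e f : Sym2 V) : ℕ :=
  if e = f then 0 else sInf {n : ℕ | ∃ u ∈ e, ∃ w ∈ f, G.dist u w = n} + 1

/-- The distance `d_G(v,f)` between a vertex and an edge: the minimum distance to an endpoint. -/
noncomputable def vDist {V : Type*} (G : SimpleGraph V) (v : V) (e : Sym2 V) : ℕ :=
  sInf {n : ℕ | ∃ u ∈ e, G.dist v u = n}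

/-- The edge-Wiener index `W_e(G)`: the sum of `eDist` over unordered pairs of edges. -/
noncomputable def edgeWiener {V : Type*} [Fintype V] (G : SimpleGraph V) : ℕ :=
  (∑ e ∈ G.edgeFinset, ∑ f ∈ G.edgeFinset, eDist G e f) / 2

/-- The vertex of `V1 ⊕ {y : V2 // y ≠ u2}` corresponding to `x : V2` after identifying
`u2` with `u1`. -/
noncomputable def glueVert {V1 V2 : Type*} (u1 : V1) (u2 : V2) (x : V2) :
    V1 ⊕ {y : V2 // y ≠ u2} :=
  if h : x = u2 then Sum.inl u1 else Sum.inr ⟨x, h⟩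

/-- The graph obtained from disjoint graphs `G1`, `G2` by identifying `u1 ∈ V(G1)` with
`u2 ∈ V(G2)` into a single vertex (namely `Sum.inl u1`). -/
noncomputable def joinAt {V1 V2 : Type*} (G1 : SimpleGraph V1) (G2 : SimpleGraph V2)
    (u1 : V1) (u2 : V2) : SimpleGraph (V1 ⊕ {y : V2 // y ≠ u2}) :=
  SimpleGraph.fromRel (fun a b =>
    (∃ x y, G1.Adj x y ∧ a = Sum.inl x ∧ b = Sum.inl y) ∨
    (∃ x y, G2.Adj x y ∧ a = glueVert u1 u2 x ∧ b = glueVert u1 u2 y))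

/-! ### Auxiliary machinery -/

section Aux

variable {V1 V2 : Type*} {G1 : SimpleGraph V1} {G2 : SimpleGraph V2} {u1 : V1} {u2 : V2}

private lemma glue_u2 : glueVert u1 u2 u2 = Sum.inl u1 := dif_pos rfl

private lemma glue_ne {x : V2} (h : x ≠ u2) : glueVert u1 u2 x = Sum.inr ⟨x, h⟩ := dif_neg h

private lemma glue_inj : Function.Injective (glueVert u1 u2 : V2 → V1 ⊕ {y : V2 // y ≠ u2}) := by
  intro a b hab
  unfold glueVert at hab
  split_ifs at hab <;> simp_all [Subtype.ext_iff]

private lemma adj_cases {a b : V1 ⊕ {y : V2 // y ≠ u2}} (h : (joinAt G1 G2 u1 u2).Adj a b) :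
    (∃ x y, G1.Adj x y ∧ a = Sum.inl x ∧ b = Sum.inl y) ∨
    (∃ x y, G2.Adj x y ∧ a = glueVert u1 u2 x ∧ b = glueVert u1 u2 y) := by
  rw [joinAt, SimpleGraph.fromRel_adj] at h
  rcases h.2 with (⟨x, y, hxy, ha, hb⟩ | ⟨x, y, hxy, ha, hb⟩) |
      (⟨x, y, hxy, hb, ha⟩ | ⟨x, y, hxy, hb, ha⟩)
  · exact Or.inl ⟨x, y, hxy, ha, hb⟩
  · exact Or.inr ⟨x, y, hxy, ha, hb⟩
  · exact Or.inl ⟨y, x, hxy.symm, ha, hb⟩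
  · exact Or.inr ⟨y, x, hxy.symm, ha, hb⟩

private lemma adj_inl_inl {x y : V1} :
    (joinAt G1 G2 u1 u2).Adj (Sum.inl x) (Sum.inl y) ↔ G1.Adj x y := by
  constructor
  · intro h
    rcases adj_cases h with ⟨p, q, hpq, hp, hq⟩ | ⟨p, q, hpq, hp, hq⟩
    · rw [Sum.inl.injEq] at hp hq; rwa [hp, hq]
    · exfalso
      by_cases hpu : p = u2
      · by_cases hqu : q = u2
        · exact hpq.ne (hpu.trans hqu.symm)
        · rw [glue_ne hqu] at hq; exact Sum.inl_ne_inr hq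
      · rw [glue_ne hpu] at hp; exact Sum.inl_ne_inr hp
  · intro h
    rw [joinAt, SimpleGraph.fromRel_adj]
    exact ⟨by simp [h.ne], Or.inl (Or.inl ⟨x, y, h, rfl, rfl⟩)⟩

private lemma adj_glue {a b : V2} :
    (joinAt G1 G2 u1 u2).Adj (glueVert u1 u2 a) (glueVert u1 u2 b) ↔ G2.Adj a b := by
  constructor
  · intro h
    rcases adj_cases h with ⟨p, q, hpq, hp, hq⟩ | ⟨p, q, hpq, hp, hq⟩
    · exfalso
      by_cases hau : a = u2
      · by_cases hbu : b = u2
        · exact h.ne (by rw [hau, hbu])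
        · rw [glue_ne hbu] at hq; exact Sum.inl_ne_inr hq.symm
      · rw [glue_ne hau] at hp; exact Sum.inl_ne_inr hp.symm
    · rw [glue_inj hp, glue_inj hq]; exact hpq
  · intro h
    rw [joinAt, SimpleGraph.fromRel_adj]
    exact ⟨fun he => h.ne (glue_inj he), Or.inl (Or.inr ⟨a, b, h, rfl, rfl⟩)⟩

end Aux

/-- Projection to `V1`. -/
private def π1 {V1 V2 : Type*} (a : V1) (b : V2) : V1 ⊕ {y : V2 // y ≠ b} → V1 :=
  Sum.elim id (fun _ => a)

/-- Projection to `V2`. -/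
private def π2 {V1 V2 : Type*} (b : V2) : V1 ⊕ {y : V2 // y ≠ b} → V2 :=
  Sum.elim (fun _ => b) Subtype.val

section Aux2

variable {V1 V2 : Type*} {G1 : SimpleGraph V1} {G2 : SimpleGraph V2} {u1 : V1} {u2 : V2}

private lemma π1_glue (y : V2) : π1 u1 u2 (glueVert u1 u2 y) = u1 := by
  by_cases h : y = u2
  · rw [h, glue_u2]; rfl
  · rw [glue_ne h]; rfl

private lemma π2_glue (y : V2) : π2 u2 (glueVert u1 u2 y) = y := by
  by_cases h : y = u2
  · rw [h, glue_u2]; rfl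
  · rw [glue_ne h]; rfl

private lemma adj_split {a b : V1 ⊕ {y : V2 // y ≠ u2}} (h : (joinAt G1 G2 u1 u2).Adj a b) :
    (G1.Adj (π1 u1 u2 a) (π1 u1 u2 b) ∧ π2 u2 a = π2 u2 b) ∨
    (G2.Adj (π2 u2 a) (π2 u2 b) ∧ π1 u1 u2 a = π1 u1 u2 b) := by
  rcases adj_cases h with ⟨x, y, hxy, ha, hb⟩ | ⟨x, y, hxy, ha, hb⟩
  · subst ha; subst hb; exact Or.inl ⟨hxy, rfl⟩
  · subst ha; subst hb
    exact Or.inr ⟨by rwa [π2_glue, π2_glue], by rw [π1_glue, π1_glue]⟩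

private lemma hπ1 : ∀ ⦃a b : V1 ⊕ {y : V2 // y ≠ u2}⦄, (joinAt G1 G2 u1 u2).Adj a b →
    π1 u1 u2 a ≠ π1 u1 u2 b → G1.Adj (π1 u1 u2 a) (π1 u1 u2 b) := by
  intro a b h hne
  exact ((adj_split h).resolve_right (fun hc => hne hc.2)).1

private lemma hπ2 : ∀ ⦃a b : V1 ⊕ {y : V2 // y ≠ u2}⦄, (joinAt G1 G2 u1 u2).Adj a b →
    π2 u2 a ≠ π2 u2 b → G2.Adj (π2 u2 a) (π2 u2 b) := by
  intro a b h hne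
  exact ((adj_split h).resolve_left (fun hc => hne hc.2)).1

private noncomputable def projWalk {V' V : Type*} {J : SimpleGraph V'} {G : SimpleGraph V}
    (f : V' → V)
    (hf : ∀ ⦃a b⦄, J.Adj a b → f a ≠ f b → G.Adj (f a) (f b)) :
    ∀ {a b : V'}, J.Walk a b → G.Walk (f a) (f b)
  | _, _, SimpleGraph.Walk.nil => SimpleGraph.Walk.nil
  | _, _, @SimpleGraph.Walk.cons _ _ a c b h p =>
      if hd : f a = f c then (projWalk f hf p).copy hd.symm rfl
      else SimpleGraph.Walk.cons (hf h hd) (projWalk f hf p)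

private lemma projWalk_cons {V' V : Type*} {J : SimpleGraph V'} {G : SimpleGraph V} (f : V' → V)
    (hf : ∀ ⦃a b⦄, J.Adj a b → f a ≠ f b → G.Adj (f a) (f b))
    {a c b : V'} (h : J.Adj a c) (p : J.Walk c b) :
    projWalk f hf (SimpleGraph.Walk.cons h p) =
      if hd : f a = f c then (projWalk f hf p).copy hd.symm rfl
      else SimpleGraph.Walk.cons (hf h hd) (projWalk f hf p) := by
  simp [projWalk]

private noncomputable def pw1 {a b : V1 ⊕ {y : V2 // y ≠ u2}}
    (p : (joinAt G1 G2 u1 u2).Walk a b) : G1.Walk (π1 u1 u2 a) (π1 u1 u2 b) :=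
  projWalk (π1 u1 u2) (fun _ _ h hne => hπ1 h hne) p

private noncomputable def pw2 {a b : V1 ⊕ {y : V2 // y ≠ u2}}
    (p : (joinAt G1 G2 u1 u2).Walk a b) : G2.Walk (π2 u2 a) (π2 u2 b) :=
  projWalk (π2 u2) (fun _ _ h hne => hπ2 h hne) p

private lemma proj_sum {a b : V1 ⊕ {y : V2 // y ≠ u2}} (p : (joinAt G1 G2 u1 u2).Walk a b) :
    (pw1 p).length + (pw2 p).length = p.length := by
  induction p with
  | nil => rfl
  | cons h q ih =>
    unfold pw1 pw2 at *
    rw [projWalk_cons, projWalk_cons]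
    rcases adj_split h with ⟨h1, h2⟩ | ⟨h2, h1⟩
    · rw [dif_neg h1.ne, dif_pos h2]
      simp only [SimpleGraph.Walk.length_cons, SimpleGraph.Walk.length_copy]
      omega
    · rw [dif_pos h1, dif_neg h2.ne]
      simp only [SimpleGraph.Walk.length_cons, SimpleGraph.Walk.length_copy]
      omega

private noncomputable def hom1 : G1 →g joinAt G1 G2 u1 u2 where
  toFun := Sum.inl
  map_rel' := fun h => adj_inl_inl.mpr h

private noncomputable def hom2 : G2 →g joinAt G1 G2 u1 u2 where
  toFun := glueVert u1 u2
  map_rel' := fun h => adj_glue.mpr h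

private lemma dist_inl_inl (h1 : G1.Connected) (x y : V1) :
    (joinAt G1 G2 u1 u2).dist (Sum.inl x) (Sum.inl y) = G1.dist x y := by
  obtain ⟨p, hp⟩ := h1.exists_walk_length_eq_dist x y
  have hle : (joinAt G1 G2 u1 u2).dist (Sum.inl x) (Sum.inl y) ≤ G1.dist x y := by
    rw [← hp]
    exact (SimpleGraph.dist_le (p.map hom1)).trans_eq (SimpleGraph.Walk.length_map _ _)
  have hreach : (joinAt G1 G2 u1 u2).Reachable (Sum.inl x) (Sum.inl y) := ⟨p.map hom1⟩
  obtain ⟨q, hq⟩ := hreach.exists_walk_length_eq_dist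
  have hge : G1.dist x y ≤ (joinAt G1 G2 u1 u2).dist (Sum.inl x) (Sum.inl y) := by
    rw [← hq]
    have h5 : G1.dist x y ≤ (pw1 q).length := SimpleGraph.dist_le (pw1 q)
    have h6 := proj_sum q
    omega
  omega

private lemma dist_glue_glue (h2 : G2.Connected) (a b : V2) :
    (joinAt G1 G2 u1 u2).dist (glueVert u1 u2 a) (glueVert u1 u2 b) = G2.dist a b := by
  obtain ⟨p, hp⟩ := h2.exists_walk_length_eq_dist a b
  have hle : (joinAt G1 G2 u1 u2).dist (glueVert u1 u2 a) (glueVert u1 u2 b) ≤ G2.dist a b := by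
    rw [← hp]
    exact (SimpleGraph.dist_le (p.map hom2)).trans_eq (SimpleGraph.Walk.length_map _ _)
  have hreach : (joinAt G1 G2 u1 u2).Reachable (glueVert u1 u2 a) (glueVert u1 u2 b) :=
    ⟨p.map hom2⟩
  obtain ⟨q, hq⟩ := hreach.exists_walk_length_eq_dist
  have hge : G2.dist a b ≤ (joinAt G1 G2 u1 u2).dist (glueVert u1 u2 a) (glueVert u1 u2 b) := by
    rw [← hq]
    have h5 : G2.dist a b ≤ (pw2 q).length := by
      have h7 := SimpleGraph.dist_le (pw2 q)
      have h8 : G2.dist a b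
          = G2.dist (π2 u2 (glueVert u1 u2 a)) (π2 u2 (glueVert u1 u2 b)) := by
        rw [π2_glue, π2_glue]
      omega
    have h6 := proj_sum q
    omega
  omega

private lemma dist_inl_glue (h1 : G1.Connected) (h2 : G2.Connected) (x : V1) (y : V2) :
    (joinAt G1 G2 u1 u2).dist (Sum.inl x) (glueVert u1 u2 y)
      = G1.dist x u1 + G2.dist u2 y := by
  obtain ⟨p, hp⟩ := h1.exists_walk_length_eq_dist x u1
  obtain ⟨q, hq⟩ := h2.exists_walk_length_eq_dist u2 y
  have hle : (joinAt G1 G2 u1 u2).dist (Sum.inl x) (glueVert u1 u2 y)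
      ≤ G1.dist x u1 + G2.dist u2 y := by
    have := SimpleGraph.dist_le (((p.map hom1).copy rfl glue_u2.symm).append (q.map hom2))
    exact le_of_le_of_eq this ((SimpleGraph.Walk.length_append _ _).trans (congrArg₂ (· + ·)
      (((SimpleGraph.Walk.length_copy _ _ _).trans (SimpleGraph.Walk.length_map _ _)).trans hp)
      ((SimpleGraph.Walk.length_map _ _).trans hq)))
  have hreach : (joinAt G1 G2 u1 u2).Reachable (Sum.inl x) (glueVert u1 u2 y) :=
    ⟨((p.map hom1).copy rfl glue_u2.symm).append (q.map hom2)⟩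
  obtain ⟨w, hw⟩ := hreach.exists_walk_length_eq_dist
  have hge : G1.dist x u1 + G2.dist u2 y
      ≤ (joinAt G1 G2 u1 u2).dist (Sum.inl x) (glueVert u1 u2 y) := by
    rw [← hw]
    have e1 : G1.dist x u1 ≤ (pw1 w).length := by
      have h7 := SimpleGraph.dist_le (pw1 w)
      have h8 : G1.dist x u1
          = G1.dist (π1 u1 u2 (Sum.inl x)) (π1 u1 u2 (glueVert u1 u2 y)) := by
        rw [π1_glue]; rfl
      omega
    have e2 : G2.dist u2 y ≤ (pw2 w).length := by
      have h7 := SimpleGraph.dist_le (pw2 w)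
      have h8 : G2.dist u2 y
          = G2.dist (π2 u2 (Sum.inl x)) (π2 u2 (glueVert u1 u2 y)) := by
        rw [π2_glue]; rfl
      omega
    have := proj_sum w
    omega
  omega

end Aux2

/-! ### sInf helpers -/

private lemma sInf_sym2 {α : Type*} (f : α → ℕ) (x y : α) :
    sInf {n : ℕ | ∃ u ∈ (s(x, y) : Sym2 α), f u = n} = min (f x) (f y) := by
  have hxm : f x ∈ {n : ℕ | ∃ u ∈ (s(x, y) : Sym2 α), f u = n} := ⟨x, by simp, rfl⟩
  have hym : f y ∈ {n : ℕ | ∃ u ∈ (s(x, y) : Sym2 α), f u = n} := ⟨y, by simp, rfl⟩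
  have h1 := Nat.sInf_le hxm
  have h2 := Nat.sInf_le hym
  have h3 := Nat.sInf_mem ⟨f x, hxm⟩
  obtain ⟨u, hu, hfu⟩ := h3
  rcases Sym2.mem_iff.mp hu with rfl | rfl <;> omega

private lemma sInf_sym2₂ {α β : Type*} (f : α → β → ℕ) (x y : α) (a b : β) :
    sInf {n : ℕ | ∃ u ∈ (s(x, y) : Sym2 α), ∃ w ∈ (s(a, b) : Sym2 β), f u w = n}
      = min (min (f x a) (f x b)) (min (f y a) (f y b)) := by
  set S := {n : ℕ | ∃ u ∈ (s(x, y) : Sym2 α), ∃ w ∈ (s(a, b) : Sym2 β), f u w = n} with hS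
  have hxa : f x a ∈ S := ⟨x, by simp, a, by simp, rfl⟩
  have hxb : f x b ∈ S := ⟨x, by simp, b, by simp, rfl⟩
  have hya : f y a ∈ S := ⟨y, by simp, a, by simp, rfl⟩
  have hyb : f y b ∈ S := ⟨y, by simp, b, by simp, rfl⟩
  have h1 := Nat.sInf_le hxa
  have h2 := Nat.sInf_le hxb
  have h3 := Nat.sInf_le hya
  have h4 := Nat.sInf_le hyb
  obtain ⟨u, hu, w, hw, hfw⟩ := Nat.sInf_mem ⟨f x a, hxa⟩
  rcases Sym2.mem_iff.mp hu with rfl | rfl <;> rcases Sym2.mem_iff.mp hw with rfl | rfl <;> omega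

private lemma eDist_comm {V : Type*} (G : SimpleGraph V) (e f : Sym2 V) :
    eDist G e f = eDist G f e := by
  unfold eDist
  by_cases h : e = f
  · simp [h]
  · rw [if_neg h, if_neg (Ne.symm h)]
    congr 1
    congr 1
    ext n
    constructor
    · rintro ⟨u, hu, w, hw, rfl⟩
      exact ⟨w, hw, u, hu, SimpleGraph.dist_comm⟩
    · rintro ⟨u, hu, w, hw, rfl⟩
      exact ⟨w, hw, u, hu, SimpleGraph.dist_comm⟩

private lemma eDist_self {V : Type*} (G : SimpleGraph V) (e : Sym2 V) : eDist G e e = 0 :=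
  if_pos rfl

private lemma even_double_sum {α : Type*} (s : Finset α) (d : α → α → ℕ)
    (hsymm : ∀ a b, d a b = d b a) (hdiag : ∀ a, d a a = 0) :
    Even (∑ e ∈ s, ∑ f ∈ s, d e f) := by
  classical
  induction s using Finset.induction_on with
  | empty => simp
  | @insert a t ha ih =>
    obtain ⟨k, hk⟩ := ih
    rw [Finset.sum_insert ha]
    have hrow : ∀ e, ∑ f ∈ insert a t, d e f = d e a + ∑ f ∈ t, d e f := fun e => by
      rw [Finset.sum_insert ha]
    rw [hrow a, Finset.sum_congr rfl (fun e _ => hrow e), Finset.sum_add_distrib]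
    have hcol : ∑ e ∈ t, d e a = ∑ e ∈ t, d a e :=
      Finset.sum_congr rfl (fun e _ => hsymm e a)
    have hd := hdiag a
    exact ⟨(∑ f ∈ t, d a f) + k, by omega⟩


private lemma eDist_pair {γ : Type*} (G : SimpleGraph γ) (p q r t : γ)
    (hne : (s(p, q) : Sym2 γ) ≠ s(r, t)) :
    eDist G s(p, q) s(r, t)
      = min (min (G.dist p r) (G.dist p t)) (min (G.dist q r) (G.dist q t)) + 1 := by
  unfold eDist
  rw [if_neg hne]
  congr 1
  exact sInf_sym2₂ (fun u w => G.dist u w) p q r t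

private lemma vDist_pair {γ : Type*} (G : SimpleGraph γ) (v p q : γ) :
    vDist G v s(p, q) = min (G.dist v p) (G.dist v q) :=
  sInf_sym2 (fun u => G.dist v u) p q

section Aux3

variable {V1 V2 : Type*} {G1 : SimpleGraph V1} {G2 : SimpleGraph V2} {u1 : V1} {u2 : V2}

private lemma vDist_map_inl (h1 : G1.Connected) (x y : V1) :
    vDist (joinAt G1 G2 u1 u2) (Sum.inl u1) ((s(x, y) : Sym2 V1).map Sum.inl)
      = min (G1.dist u1 x) (G1.dist u1 y) := by
  rw [Sym2.map_pair_eq, vDist_pair, dist_inl_inl h1, dist_inl_inl h1]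

private lemma vDist_map_glue (h2 : G2.Connected) (a b : V2) :
    vDist (joinAt G1 G2 u1 u2) (Sum.inl u1) ((s(a, b) : Sym2 V2).map (glueVert u1 u2))
      = min (G2.dist u2 a) (G2.dist u2 b) := by
  rw [Sym2.map_pair_eq, vDist_pair]
  rw [show (Sum.inl u1 : V1 ⊕ {y : V2 // y ≠ u2}) = glueVert u1 u2 u2 from glue_u2.symm]
  rw [dist_glue_glue h2, dist_glue_glue h2]

private lemma eDist_map_inl (h1 : G1.Connected) (e f : Sym2 V1) :
    eDist (joinAt G1 G2 u1 u2) (e.map Sum.inl) (f.map Sum.inl) = eDist G1 e f := by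
  unfold eDist
  by_cases hef : e = f
  · simp [hef]
  · have hne : e.map (Sum.inl : V1 → V1 ⊕ {y : V2 // y ≠ u2})
        ≠ f.map (Sum.inl : V1 → V1 ⊕ {y : V2 // y ≠ u2}) :=
      fun hc => hef (Sym2.map.injective Sum.inl_injective hc)
    rw [if_neg hne, if_neg hef]
    congr 2
    ext n
    constructor
    · rintro ⟨u, hu, w, hw, rfl⟩
      obtain ⟨p, hp, rfl⟩ := Sym2.mem_map.mp hu
      obtain ⟨q, hq, rfl⟩ := Sym2.mem_map.mp hw
      exact ⟨p, hp, q, hq, (dist_inl_inl h1 p q).symm⟩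
    · rintro ⟨p, hp, q, hq, rfl⟩
      exact ⟨Sum.inl p, Sym2.mem_map.mpr ⟨p, hp, rfl⟩, Sum.inl q,
        Sym2.mem_map.mpr ⟨q, hq, rfl⟩, dist_inl_inl h1 p q⟩

private lemma eDist_map_glue (h2 : G2.Connected) (e f : Sym2 V2) :
    eDist (joinAt G1 G2 u1 u2) (e.map (glueVert u1 u2)) (f.map (glueVert u1 u2))
      = eDist G2 e f := by
  unfold eDist
  by_cases hef : e = f
  · simp [hef]
  · have hne : e.map (glueVert u1 u2) ≠ f.map (glueVert u1 u2) :=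
      fun hc => hef (Sym2.map.injective glue_inj hc)
    rw [if_neg hne, if_neg hef]
    congr 2
    ext n
    constructor
    · rintro ⟨u, hu, w, hw, rfl⟩
      obtain ⟨p, hp, rfl⟩ := Sym2.mem_map.mp hu
      obtain ⟨q, hq, rfl⟩ := Sym2.mem_map.mp hw
      exact ⟨p, hp, q, hq, (dist_glue_glue h2 p q).symm⟩
    · rintro ⟨p, hp, q, hq, rfl⟩
      exact ⟨glueVert u1 u2 p, Sym2.mem_map.mpr ⟨p, hp, rfl⟩, glueVert u1 u2 q,
        Sym2.mem_map.mpr ⟨q, hq, rfl⟩, dist_glue_glue h2 p q⟩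

private lemma map_inl_ne_map_glue (g : Sym2 V1) (f : Sym2 V2) (hf : f ∈ G2.edgeSet) :
    g.map Sum.inl ≠ f.map (glueVert u1 u2) := by
  induction f using Sym2.ind with
  | _ a b =>
  induction g using Sym2.ind with
  | _ x y =>
  have hadj : G2.Adj a b := (SimpleGraph.mem_edgeSet _).mp hf
  have hab : a ≠ b := hadj.ne
  rw [Sym2.map_pair_eq, Sym2.map_pair_eq]
  intro hc
  have hex : ∃ c, c ≠ u2 ∧
      glueVert u1 u2 c ∈ (s(glueVert u1 u2 a, glueVert u1 u2 b) :
        Sym2 (V1 ⊕ {y : V2 // y ≠ u2})) := by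
    by_cases ha : a = u2
    · exact ⟨b, fun hb => hab (ha.trans hb.symm), by simp⟩
    · exact ⟨a, ha, by simp⟩
  obtain ⟨c, hc2, hcm⟩ := hex
  rw [← hc] at hcm
  rw [glue_ne hc2] at hcm
  rcases Sym2.mem_iff.mp hcm with h' | h' <;> exact Sum.inr_ne_inl h'

private lemma eDist_cross (h1 : G1.Connected) (h2 : G2.Connected) (g : Sym2 V1) (f : Sym2 V2)
    (hg : g ∈ G1.edgeSet) (hf : f ∈ G2.edgeSet) :
    eDist (joinAt G1 G2 u1 u2) (g.map Sum.inl) (f.map (glueVert u1 u2))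
      = vDist (joinAt G1 G2 u1 u2) (Sum.inl u1) (g.map Sum.inl)
        + vDist (joinAt G1 G2 u1 u2) (Sum.inl u1) (f.map (glueVert u1 u2)) + 1 := by
  induction f using Sym2.ind with
  | _ a b =>
  induction g using Sym2.ind with
  | _ x y =>
  have hne := map_inl_ne_map_glue (u1 := u1) (u2 := u2) (s(x, y) : Sym2 V1) (s(a, b) : Sym2 V2) hf
  rw [Sym2.map_pair_eq, Sym2.map_pair_eq] at hne ⊢
  rw [eDist_pair _ _ _ _ _ hne]
  rw [dist_inl_glue h1 h2, dist_inl_glue h1 h2, dist_inl_glue h1 h2, dist_inl_glue h1 h2]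
  rw [← Sym2.map_pair_eq, ← Sym2.map_pair_eq, vDist_map_inl h1, vDist_map_glue h2]
  have c1 : G1.dist u1 x = G1.dist x u1 := SimpleGraph.dist_comm
  have c2 : G1.dist u1 y = G1.dist y u1 := SimpleGraph.dist_comm
  omega

private lemma map_inl_mem {g : Sym2 V1} (hg : g ∈ G1.edgeSet) :
    g.map Sum.inl ∈ (joinAt G1 G2 u1 u2).edgeSet := by
  induction g using Sym2.ind with
  | _ x y =>
  rw [Sym2.map_pair_eq]
  exact (SimpleGraph.mem_edgeSet _).mpr (adj_inl_inl.mpr ((SimpleGraph.mem_edgeSet _).mp hg))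

private lemma map_glue_mem {f : Sym2 V2} (hf : f ∈ G2.edgeSet) :
    f.map (glueVert u1 u2) ∈ (joinAt G1 G2 u1 u2).edgeSet := by
  induction f using Sym2.ind with
  | _ a b =>
  rw [Sym2.map_pair_eq]
  exact (SimpleGraph.mem_edgeSet _).mpr (adj_glue.mpr ((SimpleGraph.mem_edgeSet _).mp hf))

private lemma mem_edge_iff :
    ∀ e : Sym2 (V1 ⊕ {y : V2 // y ≠ u2}), e ∈ (joinAt G1 G2 u1 u2).edgeSet ↔
      (∃ g ∈ G1.edgeSet, Sym2.map Sum.inl g = e) ∨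
      (∃ f ∈ G2.edgeSet, Sym2.map (glueVert u1 u2) f = e) := by
  intro e
  constructor
  · intro h
    induction e using Sym2.ind with
    | _ p q =>
    rcases adj_cases ((SimpleGraph.mem_edgeSet _).mp h) with ⟨x, y, hxy, rfl, rfl⟩ |
        ⟨x, y, hxy, rfl, rfl⟩
    · exact Or.inl ⟨s(x, y), (SimpleGraph.mem_edgeSet _).mpr hxy, Sym2.map_pair_eq _ _ _⟩
    · exact Or.inr ⟨s(x, y), (SimpleGraph.mem_edgeSet _).mpr hxy, Sym2.map_pair_eq _ _ _⟩
  · rintro (⟨g, hg, hge⟩ | ⟨f, hf, hge⟩) <;> rw [← hge]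
    · exact map_inl_mem hg
    · exact map_glue_mem hf

end Aux3

private lemma double_sum_add {α β : Type*} (s : Finset α) (t : Finset β)
    (a : α → ℕ) (b : β → ℕ) :
    ∑ x ∈ s, ∑ y ∈ t, (a x + b y + 1)
      = t.card * (∑ x ∈ s, a x) + s.card * (∑ y ∈ t, b y) + s.card * t.card := by
  have h : ∀ x, ∑ y ∈ t, (a x + b y + 1) = t.card * a x + ((∑ y ∈ t, b y) + t.card) := by
    intro x
    simp only [Finset.sum_add_distrib, Finset.sum_const, smul_eq_mul, mul_one]
    ring
  rw [Finset.sum_congr rfl (fun x _ => h x)]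
  simp only [Finset.sum_add_distrib, Finset.sum_const, smul_eq_mul, ← Finset.mul_sum]
  ring

theorem stmt0 {V1 V2 : Type*} [Fintype V1] [Fintype V2]
    (G1 : SimpleGraph V1) (G2 : SimpleGraph V2)
    (h1 : G1.Connected) (h2 : G2.Connected)
    (hn1 : 2 ≤ Fintype.card V1) (hn2 : 2 ≤ Fintype.card V2)
    (u1 : V1) (u2 : V2)
    (m1 m2 : ℕ) (hm1 : m1 = G1.edgeFinset.card) (hm2 : m2 = G2.edgeFinset.card)
    (hm1' : 1 ≤ m1) (hm2' : 1 ≤ m2) :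
    edgeWiener (joinAt G1 G2 u1 u2)
      = edgeWiener G1 + edgeWiener G2
        + m1 * (∑ f ∈ G2.edgeFinset,
            vDist (joinAt G1 G2 u1 u2) (Sum.inl u1) (f.map (glueVert u1 u2)))
        + m2 * (∑ g ∈ G1.edgeFinset,
            vDist (joinAt G1 G2 u1 u2) (Sum.inl u1) (g.map Sum.inl))
        + m1 * m2 := by
  classical
  have inj1 : Function.Injective
      (Sym2.map (Sum.inl : V1 → V1 ⊕ {y : V2 // y ≠ u2})) :=
    Sym2.map.injective Sum.inl_injective
  have inj2 : Function.Injective (Sym2.map (glueVert u1 u2)) :=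
    Sym2.map.injective glue_inj
  set SG := ∑ g ∈ G1.edgeFinset,
      vDist (joinAt G1 G2 u1 u2) (Sum.inl u1) (g.map Sum.inl) with hSGdef
  set SF := ∑ f ∈ G2.edgeFinset,
      vDist (joinAt G1 G2 u1 u2) (Sum.inl u1) (f.map (glueVert u1 u2)) with hSFdef
  have hEdecomp : (joinAt G1 G2 u1 u2).edgeFinset
      = G1.edgeFinset.image (Sym2.map Sum.inl)
        ∪ G2.edgeFinset.image (Sym2.map (glueVert u1 u2)) := by
    ext e
    simp only [Finset.mem_union, Finset.mem_image, SimpleGraph.mem_edgeFinset]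
    exact mem_edge_iff e
  have hdisj : Disjoint (G1.edgeFinset.image (Sym2.map Sum.inl))
      (G2.edgeFinset.image (Sym2.map (glueVert u1 u2))) := by
    rw [Finset.disjoint_left]
    rintro e he1 he2
    obtain ⟨g, hg, rfl⟩ := Finset.mem_image.mp he1
    obtain ⟨f, hf, hfe⟩ := Finset.mem_image.mp he2
    exact map_inl_ne_map_glue g f (SimpleGraph.mem_edgeFinset.mp hf) hfe.symm
  -- the four blocks
  have hA : ∑ e ∈ G1.edgeFinset.image (Sym2.map Sum.inl),
        ∑ f ∈ G1.edgeFinset.image (Sym2.map Sum.inl), eDist (joinAt G1 G2 u1 u2) e f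
      = ∑ e ∈ G1.edgeFinset, ∑ f ∈ G1.edgeFinset, eDist G1 e f := by
    rw [Finset.sum_image (fun x _ y _ h => inj1 h)]
    refine Finset.sum_congr rfl fun g _ => ?_
    rw [Finset.sum_image (fun x _ y _ h => inj1 h)]
    exact Finset.sum_congr rfl fun g' _ => eDist_map_inl h1 g g'
  have hB : ∑ e ∈ G2.edgeFinset.image (Sym2.map (glueVert u1 u2)),
        ∑ f ∈ G2.edgeFinset.image (Sym2.map (glueVert u1 u2)),
          eDist (joinAt G1 G2 u1 u2) e f
      = ∑ e ∈ G2.edgeFinset, ∑ f ∈ G2.edgeFinset, eDist G2 e f := by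
    rw [Finset.sum_image (fun x _ y _ h => inj2 h)]
    refine Finset.sum_congr rfl fun g _ => ?_
    rw [Finset.sum_image (fun x _ y _ h => inj2 h)]
    exact Finset.sum_congr rfl fun g' _ => eDist_map_glue h2 g g'
  have hC12 : ∑ e ∈ G1.edgeFinset.image (Sym2.map Sum.inl),
        ∑ f ∈ G2.edgeFinset.image (Sym2.map (glueVert u1 u2)),
          eDist (joinAt G1 G2 u1 u2) e f
      = m2 * SG + m1 * SF + m1 * m2 := by
    rw [Finset.sum_image (fun x _ y _ h => inj1 h)]
    have hstep : ∀ g ∈ G1.edgeFinset,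
        ∑ f ∈ G2.edgeFinset.image (Sym2.map (glueVert u1 u2)),
          eDist (joinAt G1 G2 u1 u2) (Sym2.map Sum.inl g) f
        = ∑ f ∈ G2.edgeFinset,
            (vDist (joinAt G1 G2 u1 u2) (Sum.inl u1) (g.map Sum.inl)
              + vDist (joinAt G1 G2 u1 u2) (Sum.inl u1) (f.map (glueVert u1 u2)) + 1) := by
      intro g hg
      rw [Finset.sum_image (fun x _ y _ h => inj2 h)]
      exact Finset.sum_congr rfl fun f hf =>
        eDist_cross h1 h2 g f (SimpleGraph.mem_edgeFinset.mp hg)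
          (SimpleGraph.mem_edgeFinset.mp hf)
    rw [Finset.sum_congr rfl hstep, double_sum_add, hSGdef, hSFdef, hm1, hm2]
  have hC21 : ∑ e ∈ G2.edgeFinset.image (Sym2.map (glueVert u1 u2)),
        ∑ f ∈ G1.edgeFinset.image (Sym2.map Sum.inl),
          eDist (joinAt G1 G2 u1 u2) e f
      = m1 * SF + m2 * SG + m2 * m1 := by
    rw [Finset.sum_image (fun x _ y _ h => inj2 h)]
    have hstep : ∀ f ∈ G2.edgeFinset,
        ∑ g ∈ G1.edgeFinset.image (Sym2.map Sum.inl),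
          eDist (joinAt G1 G2 u1 u2) (Sym2.map (glueVert u1 u2) f) g
        = ∑ g ∈ G1.edgeFinset,
            (vDist (joinAt G1 G2 u1 u2) (Sum.inl u1) (f.map (glueVert u1 u2))
              + vDist (joinAt G1 G2 u1 u2) (Sum.inl u1) (g.map Sum.inl) + 1) := by
      intro f hf
      rw [Finset.sum_image (fun x _ y _ h => inj1 h)]
      refine Finset.sum_congr rfl fun g hg => ?_
      rw [eDist_comm]
      rw [eDist_cross h1 h2 g f (SimpleGraph.mem_edgeFinset.mp hg)
        (SimpleGraph.mem_edgeFinset.mp hf)]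
      ring
    rw [Finset.sum_congr rfl hstep, double_sum_add, hSGdef, hSFdef, hm1, hm2]
  obtain ⟨a, ha⟩ := even_double_sum G1.edgeFinset (eDist G1) (eDist_comm G1) (eDist_self G1)
  obtain ⟨b, hb⟩ := even_double_sum G2.edgeFinset (eDist G2) (eDist_comm G2) (eDist_self G2)
  unfold edgeWiener
  rw [hEdecomp, Finset.sum_union hdisj]
  simp only [Finset.sum_union hdisj]
  rw [Finset.sum_add_distrib, Finset.sum_add_distrib, hA, hB, hC12, hC21, ha, hb]
  generalize m1 * SF = P
  generalize m2 * SG = Q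
  have hR : m2 * m1 = m1 * m2 := Nat.mul_comm m2 m1
  generalize hRR : m1 * m2 = R at hR ⊢
  omega
end

section
/- Let r ≥ 5 and let G be a connected simple graph in which the cycle C_r = v1v2⋯v_r v1 is an end-block attached to the rest of the graph at the vertex v1 (so G − {v2, …, v_r} is a connected graph G0 containing v1, and v2, …, v_r have no neighbours outside the cycle). Let G' = G − v_{r−1}v_r − v_2v_3 + v_{r−1}v_1 + v_3v_1 (so the cycle is shortened to v1v3v4⋯v_{r−1}v1 and v2, v_r become pendant neighbours of v1). Then W_e(G') < W_e(G). -/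
open SimpleGraph Finset
open scoped Classical

namespace EWaux


variable {V : Type*}

/-- cyclic distance on `ZMod n`. -/
def cD {n : ℕ} (a b : ZMod n) : ℕ := min (a - b).val (b - a).val

lemma cD_self {n : ℕ} (a : ZMod n) : cD a a = 0 := by
  simp [cD]

lemma val_pair {n : ℕ} [NeZero n] (x : ZMod n) :
    x.val + (-x).val = 0 ∨ x.val + (-x).val = n := by
  rcases eq_or_ne x 0 with h | h
  · subst h; left; simp
  · right
    have h1 : (x + -x).val = (x.val + (-x).val) % n := ZMod.val_add x (-x)
    rw [add_neg_cancel, ZMod.val_zero] at h1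
    have hx : x.val < n := ZMod.val_lt x
    have hnx : (-x).val < n := ZMod.val_lt (-x)
    have hxpos : 0 < x.val := by
      rcases Nat.eq_zero_or_pos x.val with h0 | h0
      · exact absurd ((ZMod.val_eq_zero x).mp h0) h
      · exact h0
    have hnxpos : 0 < (-x).val := by
      rcases Nat.eq_zero_or_pos (-x).val with h0 | h0
      · have := (ZMod.val_eq_zero (-x)).mp h0
        rw [neg_eq_zero] at this
        exact absurd this h
      · exact h0
    have hlt : x.val + (-x).val < 2 * n := by omega
    rcases Nat.lt_or_ge (x.val + (-x).val) n with hc | hc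
    · rw [Nat.mod_eq_of_lt hc] at h1; omega
    · have : (x.val + (-x).val) % n = (x.val + (-x).val) - n := by
        rw [Nat.mod_eq_sub_mod hc, Nat.mod_eq_of_lt (by omega)]
      omega

lemma cD_triangle {n : ℕ} [NeZero n] (a b c : ZMod n) :
    cD a c ≤ cD a b + cD b c := by
  have hPP := val_pair (a - b)
  have hQQ := val_pair (b - c)
  have hDD := val_pair (a - c)
  have h1 : (a - c).val = ((a - b).val + (b - c).val) % n := by
    rw [← ZMod.val_add]; ring_nf
  have h2 : (c - a).val = ((c - b).val + (b - a).val) % n := by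
    rw [← ZMod.val_add]; ring_nf
  have e1 : -(a - b) = b - a := by ring
  have e2 : -(b - c) = c - b := by ring
  have e3 : -(a - c) = c - a := by ring
  rw [e1] at hPP; rw [e2] at hQQ; rw [e3] at hDD
  have hP : (a - b).val < n := ZMod.val_lt _
  have hP' : (b - a).val < n := ZMod.val_lt _
  have hQ : (b - c).val < n := ZMod.val_lt _
  have hQ' : (c - b).val < n := ZMod.val_lt _
  have m1 : (a - c).val = (a - b).val + (b - c).val ∨
      (a - c).val = (a - b).val + (b - c).val - n := by
    rcases Nat.lt_or_ge ((a - b).val + (b - c).val) n with hc' | hc'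
    · left; rw [h1, Nat.mod_eq_of_lt hc']
    · right; rw [h1, Nat.mod_eq_sub_mod hc', Nat.mod_eq_of_lt (by omega)]
  have m2 : (c - a).val = (c - b).val + (b - a).val ∨
      (c - a).val = (c - b).val + (b - a).val - n := by
    rcases Nat.lt_or_ge ((c - b).val + (b - a).val) n with hc' | hc'
    · left; rw [h2, Nat.mod_eq_of_lt hc']
    · right; rw [h2, Nat.mod_eq_sub_mod hc', Nat.mod_eq_of_lt (by omega)]
  unfold cD
  omega

lemma cD_walk {n : ℕ} [NeZero n] {H : SimpleGraph V} (F : V → ZMod n)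
    (hF : ∀ a b, H.Adj a b → cD (F a) (F b) ≤ 1) :
    ∀ {x y : V} (p : H.Walk x y), cD (F x) (F y) ≤ p.length := by
  intro x y p
  induction p with
  | nil => simp [cD_self]
  | cons h q ih =>
      calc cD (F _) (F _) ≤ cD (F _) (F _) + cD (F _) (F _) := cD_triangle _ _ _
        _ ≤ 1 + q.length := Nat.add_le_add (hF _ _ h) ih
        _ = (SimpleGraph.Walk.cons h q).length := by simp [SimpleGraph.Walk.length_cons]; omega

lemma walk_through {H : SimpleGraph V} {S : Set V} {z : V}
    (hS : ∀ x ∈ S, ∀ w, H.Adj x w → w ∈ S ∨ w = z) :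
    ∀ {x y : V} (p : H.Walk x y), x ∈ S → y ∉ S → z ∈ p.support := by
  intro x y p
  induction p with
  | nil => intro hx hy; exact absurd hx hy
  | @cons a b c h q ih =>
      intro hx hy
      rcases hS a hx b h with hb | hb
      · exact List.mem_cons_of_mem _ (ih hb hy)
      · subst hb
        exact List.mem_cons_of_mem _ q.start_mem_support

lemma path_avoid {H : SimpleGraph V} {S : Set V} {z : V} (hz : z ∉ S)
    (hS : ∀ x ∈ S, ∀ w, H.Adj x w → w ∈ S ∨ w = z)
    {u w : V} (hu : u ∉ S) (hw : w ∉ S) (p : H.Walk u w) (hp : p.IsPath) :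
    ∀ x ∈ p.support, x ∉ S := by
  classical
  intro x hxsup hxS
  have hzx : z ≠ x := fun h => hz (h ▸ hxS)
  have h1 : z ∈ (p.takeUntil x hxsup).support := by
    have : z ∈ (p.takeUntil x hxsup).reverse.support :=
      walk_through hS (p.takeUntil x hxsup).reverse hxS hu
    rwa [SimpleGraph.Walk.support_reverse, List.mem_reverse] at this
  have h2 : z ∈ (p.dropUntil x hxsup).support :=
    walk_through hS (p.dropUntil x hxsup) hxS hw
  have hnd := hp.support_nodup
  rw [← SimpleGraph.Walk.take_spec p hxsup, SimpleGraph.Walk.support_append] at hnd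
  have h2' : z ∈ (p.dropUntil x hxsup).support.tail := by
    have hc := SimpleGraph.Walk.support_eq_cons (p.dropUntil x hxsup)
    rw [hc, List.mem_cons] at h2
    rcases h2 with h2 | h2
    · exact absurd h2.symm (Ne.symm hzx)
    · exact h2
  rw [List.nodup_append] at hnd
  exact hnd.2.2 z h1 z h2' rfl

/-- transfer a shortest walk between vertices outside `S` into a graph containing
all edges outside `S`. -/
lemma walk_outside {H H' : SimpleGraph V} {S : Set V} {z : V} (hz : z ∉ S)
    (hS : ∀ x ∈ S, ∀ w, H.Adj x w → w ∈ S ∨ w = z)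
    (hE : ∀ a b, H.Adj a b → a ∉ S → b ∉ S → H'.Adj a b)
    {u w : V} (hu : u ∉ S) (hw : w ∉ S) (hreach : H.Reachable u w) :
    ∃ p : H'.Walk u w, p.length ≤ H.dist u w := by
  classical
  obtain ⟨p, hp⟩ := hreach.exists_walk_length_eq_dist
  have hpath : p.bypass.IsPath := SimpleGraph.Walk.bypass_isPath p
  have havoid := path_avoid hz hS hu hw p.bypass hpath
  have hedges : ∀ e ∈ p.bypass.edges, e ∈ H'.edgeSet := by
    intro e he
    induction e with
    | h a b =>
        have hadj : H.Adj a b := p.bypass.adj_of_mem_edges he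
        have ha : a ∈ p.bypass.support := p.bypass.fst_mem_support_of_mem_edges he
        have hb : b ∈ p.bypass.support := p.bypass.snd_mem_support_of_mem_edges he
        exact (hE a b hadj (havoid a ha) (havoid b hb))
  refine ⟨p.bypass.transfer H' hedges, ?_⟩
  rw [SimpleGraph.Walk.length_transfer]
  calc p.bypass.length ≤ p.length := SimpleGraph.Walk.length_bypass_le p
    _ = H.dist u w := hp

lemma eDist_comm (G : SimpleGraph V) (e f : Sym2 V) :
    (if e = f then 0 else sInf {n : ℕ | ∃ u ∈ e, ∃ w ∈ f, G.dist u w = n} + 1) =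
    (if f = e then 0 else sInf {n : ℕ | ∃ u ∈ f, ∃ w ∈ e, G.dist u w = n} + 1) := by
  rcases eq_or_ne e f with h | h
  · simp [h]
  · rw [if_neg h, if_neg (Ne.symm h)]
    congr 2
    ext n
    constructor
    · rintro ⟨u, hu, w, hw, rfl⟩
      exact ⟨w, hw, u, hu, SimpleGraph.dist_comm⟩
    · rintro ⟨u, hu, w, hw, rfl⟩
      exact ⟨w, hw, u, hu, SimpleGraph.dist_comm⟩

lemma two_strict_sum {α : Type*} {s : Finset α} {a b : α → ℕ}
    (hle : ∀ x ∈ s, a x ≤ b x) {x y : α} (hx : x ∈ s) (hy : y ∈ s) (hxy : x ≠ y)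
    (hsx : a x < b x) (hsy : a y < b y) :
    (∑ z ∈ s, a z) + 2 ≤ ∑ z ∈ s, b z := by
  classical
  have hy' : y ∈ s.erase x := Finset.mem_erase.mpr ⟨Ne.symm hxy, hy⟩
  have h1a : a x + ∑ z ∈ s.erase x, a z = ∑ z ∈ s, a z := Finset.add_sum_erase s a hx
  have h1b : b x + ∑ z ∈ s.erase x, b z = ∑ z ∈ s, b z := Finset.add_sum_erase s b hx
  have h2a : a y + ∑ z ∈ (s.erase x).erase y, a z = ∑ z ∈ s.erase x, a z :=
    Finset.add_sum_erase _ a hy'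
  have h2b : b y + ∑ z ∈ (s.erase x).erase y, b z = ∑ z ∈ s.erase x, b z :=
    Finset.add_sum_erase _ b hy'
  have hrest : ∑ z ∈ (s.erase x).erase y, a z ≤ ∑ z ∈ (s.erase x).erase y, b z := by
    apply Finset.sum_le_sum
    intro i hi
    exact hle i (Finset.mem_of_mem_erase (Finset.mem_of_mem_erase hi))
  omega

lemma cD_comm {n : ℕ} (a b : ZMod n) : cD a b = cD b a := min_comm _ _

lemma natCast_sub_natCast {r i m : ℕ} (hi : i < r) (hm : m < r) :
    (i : ZMod r) - (m : ZMod r) = ((i + r - m : ℕ) : ZMod r) := by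
  have h : (m : ℕ) ≤ i + r := by omega
  rw [Nat.cast_sub h]
  push_cast
  rw [ZMod.natCast_self]
  ring

lemma val_cast_sub {r i m : ℕ} (hr : 0 < r) (hi : i < r) (hm : m < r) :
    ((i : ZMod r) - (m : ZMod r)).val = (i + r - m) % r := by
  haveI : NeZero r := ⟨by omega⟩
  rw [natCast_sub_natCast hi hm, ZMod.val_natCast]

lemma cD_eval {r i m : ℕ} (hr : 0 < r) (hi : i < r) (hm : m < r) :
    cD (i : ZMod r) (m : ZMod r) = min (Nat.dist i m) (r - Nat.dist i m) := by
  unfold cD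
  rw [val_cast_sub hr hi hm, val_cast_sub hr hm hi]
  rcases le_or_gt m i with h | h
  · have e1 : (i + r - m) % r = i - m := by
      have : i + r - m = (i - m) + r := by omega
      rw [this, Nat.add_mod_right, Nat.mod_eq_of_lt (by omega)]
    rcases eq_or_lt_of_le h with h' | h'
    · subst h'
      rw [e1]
      simp [Nat.dist_self]
    · have e2 : (m + r - i) % r = m + r - i := Nat.mod_eq_of_lt (by omega)
      rw [e1, e2, Nat.dist]
      omega
  · have e1 : (i + r - m) % r = i + r - m := Nat.mod_eq_of_lt (by omega)
    have e2 : (m + r - i) % r = m - i := by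
      have : m + r - i = (m - i) + r := by omega
      rw [this, Nat.add_mod_right, Nat.mod_eq_of_lt (by omega)]
    rw [e1, e2, Nat.dist]
    omega

lemma walk_cyc_lb (r : ℕ) (hr : 5 ≤ r) (G : SimpleGraph V) (v : ℕ → V)
    (hinj : ∀ i < r, ∀ j < r, v i = v j → i = j)
    (hclosed : ∀ i, 1 ≤ i → i < r → ∀ w, G.Adj (v i) w →
      w = v ((i + 1) % r) ∨ w = v ((i + r - 1) % r))
    {i m : ℕ} (hi : i < r) (hm : m < r) (p : G.Walk (v i) (v m)) :
    min (Nat.dist i m) (r - Nat.dist i m) ≤ p.length := by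
  haveI : NeZero r := ⟨by omega⟩
  set F : V → ZMod r := fun x => if h : ∃ j, j < r ∧ x = v j then ((h.choose : ℕ) : ZMod r) else 0
    with hF
  have evalF : ∀ j, j < r → F (v j) = (j : ZMod r) := by
    intro j hj
    have hex : ∃ k, k < r ∧ v j = v k := ⟨j, hj, rfl⟩
    rw [hF]
    simp only [dif_pos hex]
    have hspec := hex.choose_spec
    have : j = hex.choose := hinj j hj hex.choose hspec.1 hspec.2
    rw [← this]
  have Fzero : ∀ x, (¬∃ j, 0 < j ∧ j < r ∧ x = v j) → F x = 0 := by
    intro x hx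
    rw [hF]
    by_cases h : ∃ j, j < r ∧ x = v j
    · simp only [dif_pos h]
      have hspec := h.choose_spec
      have h0 : h.choose = 0 := by
        by_contra hne
        exact hx ⟨h.choose, Nat.pos_of_ne_zero hne, hspec.1, hspec.2⟩
      rw [h0]
      simp
    · simp only [dif_neg h]
  have val_one : ((1 : ZMod r)).val = 1 := by
    have : ((1 : ℕ) : ZMod r) = (1 : ZMod r) := by push_cast; ring
    rw [← this, ZMod.val_natCast, Nat.mod_eq_of_lt (by omega)]
  have inner_step : ∀ a b, G.Adj a b → (∃ j, 0 < j ∧ j < r ∧ a = v j) → cD (F a) (F b) ≤ 1 := by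
    rintro a b hadj ⟨j, hj0, hjr, rfl⟩
    rcases hclosed j hj0 hjr b hadj with hb | hb
    · subst hb
      rw [evalF j hjr, evalF _ (Nat.mod_lt _ (by omega))]
      have hcast : (((j + 1) % r : ℕ) : ZMod r) = ((j + 1 : ℕ) : ZMod r) := ZMod.natCast_mod _ _
      rw [hcast]
      have : ((j + 1 : ℕ) : ZMod r) - (j : ZMod r) = 1 := by push_cast; ring
      unfold cD
      rw [this, val_one]
      exact min_le_right _ _
    · subst hb
      rw [evalF j hjr, evalF _ (Nat.mod_lt _ (by omega))]
      have hcast : (((j + r - 1) % r : ℕ) : ZMod r) = ((j + r - 1 : ℕ) : ZMod r) :=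
        ZMod.natCast_mod _ _
      rw [hcast]
      have : (j : ZMod r) - ((j + r - 1 : ℕ) : ZMod r) = 1 := by
        rw [Nat.cast_sub (by omega)]
        push_cast
        rw [ZMod.natCast_self]
        ring
      unfold cD
      rw [this, val_one]
      exact min_le_left _ _
  have step : ∀ a b, G.Adj a b → cD (F a) (F b) ≤ 1 := by
    intro a b hadj
    by_cases ha : ∃ j, 0 < j ∧ j < r ∧ a = v j
    · exact inner_step a b hadj ha
    · by_cases hb : ∃ j, 0 < j ∧ j < r ∧ b = v j
      · rw [cD_comm]; exact inner_step b a hadj.symm hb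
      · rw [Fzero a ha, Fzero b hb]
        simp [cD]
  have := cD_walk F step p
  rw [evalF i hi, evalF m hm, cD_eval (by omega) hi hm] at this
  exact this


lemma chi_numeric (r i m : ℕ) (hr : 5 ≤ r) (hi : i < r) (hm : m < r) :
    min (Nat.dist ((if i = 1 ∨ i = r-1 then 0 else i) - 1) ((if m = 1 ∨ m = r-1 then 0 else m) - 1))
      ((r-2) - Nat.dist ((if i = 1 ∨ i = r-1 then 0 else i) - 1) ((if m = 1 ∨ m = r-1 then 0 else m) - 1))
      ≤ min (Nat.dist i m) (r - Nat.dist i m) := by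
  simp only [Nat.dist]
  split_ifs <;> omega

end EWaux
theorem stmt4 {V : Type*} [Fintype V] (r : ℕ) (hr : 5 ≤ r)
    (G : SimpleGraph V) (hconn : G.Connected)
    (v : ℕ → V)
    (hinj : ∀ i < r, ∀ j < r, v i = v j → i = j)
    (hcyc : ∀ i < r, G.Adj (v i) (v ((i + 1) % r)))
    (hclosed : ∀ i, 1 ≤ i → i < r → ∀ w, G.Adj (v i) w →
      w = v ((i + 1) % r) ∨ w = v ((i + r - 1) % r))
    (G' : SimpleGraph V)
    (hG' : G' = SimpleGraph.fromRel (fun a b =>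
        (G.Adj a b ∧ s(a, b) ≠ s(v (r - 2), v (r - 1)) ∧ s(a, b) ≠ s(v 1, v 2)) ∨
        (a = v (r - 2) ∧ b = v 0) ∨ (a = v 2 ∧ b = v 0))) :
    edgeWiener G' < edgeWiener G := by
  have hvne : ∀ {a b : ℕ}, a < r → b < r → a ≠ b → v a ≠ v b :=
    fun ha hb hne heq => hne (hinj _ ha _ hb heq)
  set S : Set V := {x | ∃ j, 0 < j ∧ j < r ∧ x = v j} with hSdef
  have hv0S : v 0 ∉ S := by
    rintro ⟨j, hj0, hjr, hj⟩
    exact hvne (by omega) hjr (by omega) hj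
  have hviS : ∀ i, 0 < i → i < r → v i ∈ S := fun i h1 h2 => ⟨i, h1, h2, rfl⟩
  have hmod1 : ∀ i, i + 1 < r → (i + 1) % r = i + 1 := fun i h => Nat.mod_eq_of_lt h
  have hmodr : (r - 1 + 1) % r = 0 := by
    have : r - 1 + 1 = r := by omega
    rw [this, Nat.mod_self]
  have hmodm : ∀ i, 1 ≤ i → i < r → (i + r - 1) % r = i - 1 := by
    intro i h1 h2
    have : i + r - 1 = (i - 1) + r := by omega
    rw [this, Nat.add_mod_right, Nat.mod_eq_of_lt (by omega)]
  have hadjG : ∀ i, i + 1 < r → G.Adj (v i) (v (i + 1)) := by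
    intro i h
    have := hcyc i (by omega)
    rwa [hmod1 i h] at this
  have hadjG0 : G.Adj (v (r - 1)) (v 0) := by
    have := hcyc (r - 1) (by omega)
    rwa [hmodr] at this
  have hclosedS : ∀ x ∈ S, ∀ w, G.Adj x w → w ∈ S ∨ w = v 0 := by
    rintro x ⟨j, hj0, hjr, rfl⟩ w hadj
    rcases hclosed j hj0 hjr w hadj with hb | hb
    · rcases eq_or_ne j (r - 1) with hj | hj
      · right; rw [hb, hj, hmodr]
      · left; rw [hb, hmod1 j (by omega)]
        exact hviS _ (by omega) (by omega)
    · rw [hmodm j hj0 hjr] at hb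
      rcases eq_or_ne j 1 with hj | hj
      · right; rw [hb, hj]
      · left; rw [hb]
        exact hviS _ (by omega) (by omega)
  have hSym2ne : ∀ {a b c d : ℕ}, a < r → b < r → c < r → d < r →
      ¬(a = c ∧ b = d ∨ a = d ∧ b = c) → s(v a, v b) ≠ s(v c, v d) := by
    intro a b c d ha hb hc hd h heq
    rw [Sym2.eq_iff] at heq
    rcases heq with ⟨h1, h2⟩ | ⟨h1, h2⟩
    · exact h (Or.inl ⟨hinj _ ha _ hc h1, hinj _ hb _ hd h2⟩)
    · exact h (Or.inr ⟨hinj _ ha _ hd h1, hinj _ hb _ hc h2⟩)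
  -- G' adjacency facts
  have hA02 : G'.Adj (v 0) (v 2) := by
    rw [hG', SimpleGraph.fromRel_adj]
    exact ⟨(hvne (by omega) (by omega) (by omega)), Or.inr (Or.inr (Or.inr ⟨rfl, rfl⟩))⟩
  have hA20 : G'.Adj (v (r - 2)) (v 0) := by
    rw [hG', SimpleGraph.fromRel_adj]
    exact ⟨(hvne (by omega) (by omega) (by omega)), Or.inl (Or.inr (Or.inl ⟨rfl, rfl⟩))⟩
  have hkept : ∀ a b, G.Adj a b → s(a, b) ≠ s(v (r - 2), v (r - 1)) → s(a, b) ≠ s(v 1, v 2) →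
      G'.Adj a b := by
    intro a b hab h1 h2
    rw [hG', SimpleGraph.fromRel_adj]
    exact ⟨hab.ne, Or.inl (Or.inl ⟨hab, h1, h2⟩)⟩
  have hA01 : G'.Adj (v 0) (v 1) := by
    refine hkept _ _ (hadjG 0 (by omega)) ?_ ?_
    · exact hSym2ne (by omega) (by omega) (by omega) (by omega) (by omega)
    · exact hSym2ne (by omega) (by omega) (by omega) (by omega) (by omega)
  have hAmid : ∀ i, 2 ≤ i → i + 1 ≤ r - 2 → G'.Adj (v i) (v (i + 1)) := by
    intro i h2 hi
    refine hkept _ _ (hadjG i (by omega)) ?_ ?_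
    · exact hSym2ne (by omega) (by omega) (by omega) (by omega) (by omega)
    · exact hSym2ne (by omega) (by omega) (by omega) (by omega) (by omega)
  have hAr10 : G'.Adj (v (r - 1)) (v 0) := by
    refine hkept _ _ hadjG0 ?_ ?_
    · exact hSym2ne (by omega) (by omega) (by omega) (by omega) (by omega)
    · exact hSym2ne (by omega) (by omega) (by omega) (by omega) (by omega)
  have hE : ∀ a b, G.Adj a b → a ∉ S → b ∉ S → G'.Adj a b := by
    intro a b hab ha hb
    refine hkept a b hab ?_ ?_
    · intro h
      rw [Sym2.eq_iff] at h
      rcases h with ⟨h1, h2⟩ | ⟨h1, h2⟩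
      · exact ha (h1 ▸ hviS (r - 2) (by omega) (by omega))
      · exact ha (h1 ▸ hviS (r - 1) (by omega) (by omega))
    · intro h
      rw [Sym2.eq_iff] at h
      rcases h with ⟨h1, h2⟩ | ⟨h1, h2⟩
      · exact ha (h1 ▸ hviS 1 (by omega) (by omega))
      · exact ha (h1 ▸ hviS 2 (by omega) (by omega))
  -- G' connectivity
  have hchain : ∀ k, 2 ≤ k → k ≤ r - 2 → G'.Reachable (v 0) (v k) := by
    intro k h2 hk
    induction k, h2 using Nat.le_induction with
    | base => exact hA02.reachable
    | succ k hk' ih => exact (ih (by omega)).trans (hAmid k hk' hk).reachable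
  have hreach' : ∀ x, G'.Reachable (v 0) x := by
    intro x
    by_cases hx : x ∈ S
    · obtain ⟨j, hj0, hjr, rfl⟩ := hx
      rcases eq_or_ne j 1 with h | h
      · rw [h]; exact hA01.reachable
      rcases eq_or_ne j (r - 1) with h' | h'
      · rw [h']; exact hAr10.reachable.symm
      · exact hchain j (by omega) (by omega)
    · obtain ⟨p, _⟩ := EWaux.walk_outside hv0S hclosedS hE hv0S hx (hconn (v 0) x)
      exact ⟨p⟩
  have hconn' : G'.Connected := by
    haveI : Nonempty V := hconn.nonempty
    exact ⟨fun a b => (hreach' a).symm.trans (hreach' b)⟩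
  have hM5 : ∀ a b, a ∉ S → b ∉ S → G'.dist a b ≤ G.dist a b := by
    intro a b ha hb
    obtain ⟨p, hp⟩ := EWaux.walk_outside hv0S hclosedS hE ha hb (hconn a b)
    exact le_trans (SimpleGraph.dist_le p) hp
  -- upper bounds on G' distances along the new cycle
  have hU0 : ∀ a b, 2 ≤ a → a ≤ b → b ≤ r - 2 → G'.dist (v a) (v b) ≤ b - a := by
    intro a b h2 hab hbr
    induction b, hab using Nat.le_induction with
    | base => simp [SimpleGraph.dist_self]
    | succ b hb' ih =>
        have t1 := hconn'.dist_triangle (u := v a) (v := v b) (w := v (b + 1))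
        have t2 : G'.dist (v b) (v (b + 1)) = 1 :=
          SimpleGraph.dist_eq_one_iff_adj.mpr (hAmid b (by omega) (by omega))
        have t3 := ih (by omega)
        omega
  have hU00 : ∀ b, 2 ≤ b → b ≤ r - 2 → G'.dist (v 0) (v b) ≤ min (b - 1) (r - 1 - b) := by
    intro b h2 hb
    have d1 : G'.dist (v 0) (v 2) = 1 := SimpleGraph.dist_eq_one_iff_adj.mpr hA02
    have d2 : G'.dist (v 0) (v (r - 2)) = 1 := SimpleGraph.dist_eq_one_iff_adj.mpr hA20.symm
    have t1 := hconn'.dist_triangle (u := v 0) (v := v 2) (w := v b)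
    have t2 := hconn'.dist_triangle (u := v 0) (v := v (r - 2)) (w := v b)
    have t3 := hU0 2 b (by omega) h2 hb
    have t4 := hU0 b (r - 2) h2 hb (by omega)
    have t5 : G'.dist (v (r - 2)) (v b) = G'.dist (v b) (v (r - 2)) := SimpleGraph.dist_comm
    omega
  have hU1 : ∀ a b, (a = 0 ∨ 2 ≤ a ∧ a ≤ r - 2) → (b = 0 ∨ 2 ≤ b ∧ b ≤ r - 2) →
      G'.dist (v a) (v b) ≤ min (Nat.dist (a - 1) (b - 1)) ((r - 2) - Nat.dist (a - 1) (b - 1)) := by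
    intro a b ha hb
    rcases ha with rfl | ⟨ha2, har⟩
    · rcases hb with rfl | ⟨hb2, hbr⟩
      · simp [SimpleGraph.dist_self]
      · have h := hU00 b hb2 hbr
        simp only [Nat.dist] at *
        omega
    · rcases hb with rfl | ⟨hb2, hbr⟩
      · have h := hU00 a ha2 har
        have hc : G'.dist (v a) (v 0) = G'.dist (v 0) (v a) := SimpleGraph.dist_comm
        simp only [Nat.dist] at *
        omega
      · rcases le_or_gt a b with hab | hab
        · have h1 := hU0 a b ha2 hab hbr
          have h2 := hconn'.dist_triangle (u := v a) (v := v 0) (w := v b)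
          have h3 := hU00 a ha2 har
          have h4 := hU00 b hb2 hbr
          have hc : G'.dist (v a) (v 0) = G'.dist (v 0) (v a) := SimpleGraph.dist_comm
          simp only [Nat.dist] at *
          omega
        · have h1 := hU0 b a hb2 (by omega) har
          have h2 := hconn'.dist_triangle (u := v a) (v := v 0) (w := v b)
          have h3 := hU00 a ha2 har
          have h4 := hU00 b hb2 hbr
          have hc : G'.dist (v a) (v 0) = G'.dist (v 0) (v a) := SimpleGraph.dist_comm
          have hc2 : G'.dist (v b) (v a) = G'.dist (v a) (v b) := SimpleGraph.dist_comm
          simp only [Nat.dist] at *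
          omega
  -- lower bounds on G distances
  have hL1 : ∀ i m, i < r → m < r →
      min (Nat.dist i m) (r - Nat.dist i m) ≤ G.dist (v i) (v m) := by
    intro i m hi hm
    obtain ⟨p, hp⟩ := (hconn (v i) (v m)).exists_walk_length_eq_dist
    have := EWaux.walk_cyc_lb r hr G v hinj hclosed hi hm p
    omega
  have hL2 : ∀ u, u ∉ S → ∀ m, m < r → G.dist u (v 0) + min m (r - m) ≤ G.dist u (v m) := by
    intro u hu m hm
    rcases Nat.eq_zero_or_pos m with rfl | hm0
    · simp
    · obtain ⟨p, hp⟩ := (hconn u (v m)).exists_walk_length_eq_dist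
      have hsup : v 0 ∈ p.support := by
        have := EWaux.walk_through hclosedS p.reverse (hviS m hm0 hm) hu
        rwa [SimpleGraph.Walk.support_reverse, List.mem_reverse] at this
      have hq : (p.takeUntil _ hsup).length + (p.dropUntil _ hsup).length = p.length := by
        have := congrArg SimpleGraph.Walk.length (p.take_spec hsup)
        rwa [SimpleGraph.Walk.length_append] at this
      have d1 : G.dist u (v 0) ≤ (p.takeUntil _ hsup).length := SimpleGraph.dist_le _
      have d2 := EWaux.walk_cyc_lb r hr G v hinj hclosed (show 0 < r by omega) hm
        (p.dropUntil _ hsup)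
      rw [Nat.dist_zero_left] at d2
      omega
  -- edge machinery
  set cE : ℕ → Sym2 V := fun j => s(v j, v ((j + 1) % r)) with hcE
  have hcE_mem : ∀ j, j < r → cE j ∈ G.edgeSet := fun j hj => G.mem_edgeSet.mpr (hcyc j hj)
  have hclassify : ∀ e ∈ G.edgeSet, (∀ x ∈ e, x ∉ S) ∨ (∃ j, j < r ∧ e = cE j) := by
    intro e he
    revert he
    induction e with
    | h a b =>
      intro he
      rw [SimpleGraph.mem_edgeSet] at he
      by_cases haS : a ∈ S
      · obtain ⟨j, hj0, hjr, rfl⟩ := haS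
        rcases hclosed j hj0 hjr b he with hb | hb
        · right; exact ⟨j, hjr, by rw [hb, hcE]⟩
        · right
          refine ⟨j - 1, by omega, ?_⟩
          rw [hb, hmodm j hj0 hjr, hcE]
          simp only
          rw [show j - 1 + 1 = j from by omega, Nat.mod_eq_of_lt hjr]
          exact Sym2.eq_swap
      · by_cases hbS : b ∈ S
        · obtain ⟨j, hj0, hjr, rfl⟩ := hbS
          rcases hclosed j hj0 hjr a he.symm with hb | hb
          · right
            refine ⟨j, hjr, ?_⟩
            rw [hb, hcE]
            exact Sym2.eq_swap
          · right
            refine ⟨j - 1, by omega, ?_⟩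
            rw [hb, hmodm j hj0 hjr, hcE]
            simp only
            rw [show j - 1 + 1 = j from by omega, Nat.mod_eq_of_lt hjr]
        · left
          intro x hx
          rcases Sym2.mem_iff.mp hx with rfl | rfl
          exacts [haS, hbS]
  set φf : Sym2 V → Sym2 V := fun e =>
    if e = s(v 1, v 2) then s(v 0, v 2)
    else if e = s(v (r - 2), v (r - 1)) then s(v (r - 2), v 0) else e with hφf
  set ψf : Sym2 V → Sym2 V := fun e =>
    if e = s(v 0, v 2) then s(v 1, v 2)
    else if e = s(v (r - 2), v 0) then s(v (r - 2), v (r - 1)) else e with hψf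
  have hrm1G : s(v 1, v 2) ∈ G.edgeSet := by
    rw [SimpleGraph.mem_edgeSet]
    have := hadjG 1 (by omega); exact this
  have hrm2G : s(v (r - 2), v (r - 1)) ∈ G.edgeSet := by
    rw [SimpleGraph.mem_edgeSet]
    have := hadjG (r - 2) (by omega)
    rwa [show r - 2 + 1 = r - 1 from by omega] at this
  have hnotG02 : s(v 0, v 2) ∉ G.edgeSet := by
    rw [SimpleGraph.mem_edgeSet]
    intro h
    rcases hclosed 2 (by omega) (by omega) (v 0) h.symm with hb | hb
    · rw [hmod1 2 (by omega)] at hb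
      exact hvne (show (0:ℕ) < r by omega) (show 2 + 1 < r by omega) (by omega) hb
    · rw [hmodm 2 (by omega) (by omega)] at hb
      exact hvne (show (0:ℕ) < r by omega) (show 2 - 1 < r by omega) (by omega) hb
  have hnotGr20 : s(v (r - 2), v 0) ∉ G.edgeSet := by
    rw [SimpleGraph.mem_edgeSet]
    intro h
    rcases hclosed (r - 2) (by omega) (by omega) (v 0) h with hb | hb
    · rw [show (r - 2 + 1) % r = r - 1 from by
        rw [show r - 2 + 1 = r - 1 from by omega, Nat.mod_eq_of_lt (by omega)]] at hb
      exact hvne (show (0:ℕ) < r by omega) (show r - 1 < r by omega) (by omega) hb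
    · rw [hmodm (r - 2) (by omega) (by omega)] at hb
      exact hvne (show (0:ℕ) < r by omega) (show r - 2 - 1 < r by omega) (by omega) hb
  have hG'classify : ∀ e ∈ G'.edgeSet,
      (e ∈ G.edgeSet ∧ e ≠ s(v 1, v 2) ∧ e ≠ s(v (r - 2), v (r - 1))) ∨
      e = s(v 0, v 2) ∨ e = s(v (r - 2), v 0) := by
    intro e he
    revert he
    induction e with
    | h a b =>
      intro he
      rw [hG', SimpleGraph.mem_edgeSet, SimpleGraph.fromRel_adj] at he
      obtain ⟨hab, hR⟩ := he
      rcases hR with (⟨hadj, h1, h2⟩ | ⟨h1, h2⟩ | ⟨h1, h2⟩) |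
        (⟨hadj, h1, h2⟩ | ⟨h1, h2⟩ | ⟨h1, h2⟩)
      · exact Or.inl ⟨G.mem_edgeSet.mpr hadj, h2, h1⟩
      · right; right; rw [h1, h2]
      · right; left; rw [h1, h2]; exact Sym2.eq_swap
      · refine Or.inl ⟨G.mem_edgeSet.mpr hadj.symm, ?_, ?_⟩
        · exact fun hh => h2 ((Sym2.eq_swap (a := b) (b := a)).trans hh)
        · exact fun hh => h1 ((Sym2.eq_swap (a := b) (b := a)).trans hh)
      · right; right; rw [h1, h2]; exact Sym2.eq_swap
      · right; left; rw [h1, h2]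
  have hkeptE : ∀ e ∈ G.edgeSet, e ≠ s(v 1, v 2) → e ≠ s(v (r - 2), v (r - 1)) →
      e ∈ G'.edgeSet := by
    intro e he
    revert he
    induction e with
    | h a b =>
      intro he h1 h2
      rw [SimpleGraph.mem_edgeSet] at he ⊢
      exact hkept a b he h2 h1
  have hφ_mem : ∀ e ∈ G.edgeSet, φf e ∈ G'.edgeSet := by
    intro e he
    rw [hφf]
    simp only
    by_cases h1 : e = s(v 1, v 2)
    · rw [if_pos h1]
      exact G'.mem_edgeSet.mpr hA02
    · rw [if_neg h1]
      by_cases h2 : e = s(v (r - 2), v (r - 1))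
      · rw [if_pos h2]
        exact G'.mem_edgeSet.mpr hA20
      · rw [if_neg h2]
        exact hkeptE e he h1 h2
  have hψ_mem : ∀ e ∈ G'.edgeSet, ψf e ∈ G.edgeSet := by
    intro e he
    rw [hψf]
    simp only
    rcases hG'classify e he with ⟨heG, hne1, hne2⟩ | h | h
    · rw [if_neg (fun h : e = s(v 0, v 2) => hnotG02 (h ▸ heG)), if_neg (fun h : e = s(v (r - 2), v 0) => hnotGr20 (h ▸ heG))]
      exact heG
    · rw [if_pos h]
      exact hrm1G
    · rw [h]
      rw [if_neg (hSym2ne (by omega) (by omega) (by omega) (by omega) (by omega)), if_pos rfl]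
      exact hrm2G
  have hψφ : ∀ e ∈ G.edgeSet, ψf (φf e) = e := by
    intro e he
    rw [hφf, hψf]
    simp only
    by_cases h1 : e = s(v 1, v 2)
    · rw [if_pos h1, if_pos rfl, h1]
    · rw [if_neg h1]
      by_cases h2 : e = s(v (r - 2), v (r - 1))
      · rw [if_pos h2,
          if_neg (hSym2ne (by omega) (by omega) (by omega) (by omega) (by omega)),
          if_pos rfl, h2]
      · rw [if_neg h2, if_neg (fun h : e = s(v 0, v 2) => hnotG02 (h ▸ he)), if_neg (fun h : e = s(v (r - 2), v 0) => hnotGr20 (h ▸ he))]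
  have hφψ : ∀ e ∈ G'.edgeSet, φf (ψf e) = e := by
    intro e he
    rw [hφf, hψf]
    simp only
    rcases hG'classify e he with ⟨heG, hne1, hne2⟩ | h | h
    · rw [if_neg (fun h : e = s(v 0, v 2) => hnotG02 (h ▸ heG)), if_neg (fun h : e = s(v (r - 2), v 0) => hnotGr20 (h ▸ heG)),
        if_neg hne1, if_neg hne2]
    · rw [if_pos h, if_pos rfl, h]
    · rw [h, if_neg (hSym2ne (by omega) (by omega) (by omega) (by omega) (by omega)),
        if_pos rfl,
        if_neg (hSym2ne (by omega) (by omega) (by omega) (by omega) (by omega)),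
        if_pos rfl]
  -- explicit cycle edges and their images
  have hcE0 : cE 0 = s(v 0, v 1) := by rw [hcE]; simp only; rw [hmod1 0 (by omega)]
  have hcE1 : cE 1 = s(v 1, v 2) := by rw [hcE]; simp only; rw [hmod1 1 (by omega)]
  have hcEr2 : cE (r - 2) = s(v (r - 2), v (r - 1)) := by
    rw [hcE]; simp only
    rw [show r - 2 + 1 = r - 1 from by omega, Nat.mod_eq_of_lt (by omega)]
  have hcEr1 : cE (r - 1) = s(v (r - 1), v 0) := by rw [hcE]; simp only; rw [hmodr]
  have hcEmid : ∀ j, j + 1 < r → cE j = s(v j, v (j + 1)) := by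
    intro j h; rw [hcE]; simp only; rw [hmod1 j h]
  have hφ0 : φf (cE 0) = s(v 0, v 1) := by
    rw [hcE0, hφf]; simp only
    rw [if_neg (hSym2ne (by omega) (by omega) (by omega) (by omega) (by omega)),
      if_neg (hSym2ne (by omega) (by omega) (by omega) (by omega) (by omega))]
  have hφ1 : φf (cE 1) = s(v 0, v 2) := by
    rw [hcE1, hφf]; simp only
    simp
  have hφmid : ∀ j, 2 ≤ j → j + 1 ≤ r - 2 → φf (cE j) = s(v j, v (j + 1)) := by
    intro j h2 hj
    rw [hcEmid j (by omega), hφf]; simp only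
    rw [if_neg (hSym2ne (by omega) (by omega) (by omega) (by omega) (by omega)),
      if_neg (hSym2ne (by omega) (by omega) (by omega) (by omega) (by omega))]
  have hφr2 : φf (cE (r - 2)) = s(v (r - 2), v 0) := by
    rw [hcEr2, hφf]; simp only
    rw [if_neg (hSym2ne (by omega) (by omega) (by omega) (by omega) (by omega))]
    simp
  have hφr1 : φf (cE (r - 1)) = s(v (r - 1), v 0) := by
    rw [hcEr1, hφf]; simp only
    rw [if_neg (hSym2ne (by omega) (by omega) (by omega) (by omega) (by omega)),
      if_neg (hSym2ne (by omega) (by omega) (by omega) (by omega) (by omega))]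
  have hφc : ∀ j, j < r → ∀ i, (i = j ∨ i = (j + 1) % r) →
      v (if i = 1 ∨ i = r - 1 then 0 else i) ∈ φf (cE j) := by
    intro j hj i hi
    by_cases h0 : j = 0
    · subst h0
      rw [hmod1 0 (by omega)] at hi
      rw [hφ0]
      rcases hi with rfl | rfl
      · rw [if_neg (by omega)]; exact Sym2.mem_iff.mpr (Or.inl rfl)
      · rw [if_pos (by omega)]; exact Sym2.mem_iff.mpr (Or.inl rfl)
    by_cases h1 : j = 1
    · subst h1
      rw [hmod1 1 (by omega)] at hi
      rw [hφ1]
      rcases hi with rfl | rfl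
      · rw [if_pos (by omega)]; exact Sym2.mem_iff.mpr (Or.inl rfl)
      · rw [if_neg (by omega)]; exact Sym2.mem_iff.mpr (Or.inr rfl)
    by_cases h2 : j = r - 2
    · subst h2
      rw [show (r - 2 + 1) % r = r - 1 from by
        rw [show r - 2 + 1 = r - 1 from by omega, Nat.mod_eq_of_lt (by omega)]] at hi
      rw [hφr2]
      rcases hi with rfl | rfl
      · rw [if_neg (by omega)]; exact Sym2.mem_iff.mpr (Or.inl rfl)
      · rw [if_pos (by omega)]; exact Sym2.mem_iff.mpr (Or.inr rfl)
    by_cases h3 : j = r - 1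
    · subst h3
      rw [hmodr] at hi
      rw [hφr1]
      rcases hi with rfl | rfl
      · rw [if_pos (by omega)]; exact Sym2.mem_iff.mpr (Or.inr rfl)
      · rw [if_neg (by omega)]; exact Sym2.mem_iff.mpr (Or.inr rfl)
    · have hmid : 2 ≤ j ∧ j + 1 ≤ r - 2 := by omega
      rw [hmod1 j (by omega)] at hi
      rw [hφmid j hmid.1 hmid.2]
      rcases hi with rfl | rfl
      · rw [if_neg (by omega)]; exact Sym2.mem_iff.mpr (Or.inl rfl)
      · rw [if_neg (by omega)]; exact Sym2.mem_iff.mpr (Or.inr rfl)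
  have hχsat : ∀ m, m < r →
      ((if m = 1 ∨ m = r - 1 then 0 else m) = 0 ∨
        2 ≤ (if m = 1 ∨ m = r - 1 then 0 else m) ∧ (if m = 1 ∨ m = r - 1 then 0 else m) ≤ r - 2) := by
    intro m hm
    by_cases hc : m = 1 ∨ m = r - 1
    · rw [if_pos hc]; left; rfl
    · rw [if_neg hc]; omega
  have hφE0 : ∀ e, (∀ x ∈ e, x ∉ S) → φf e = e := by
    intro e hx
    have c1 : e ≠ s(v 1, v 2) := by
      intro h
      exact hx (v 1) (by rw [h]; exact Sym2.mem_iff.mpr (Or.inl rfl)) (hviS 1 (by omega) (by omega))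
    have c2 : e ≠ s(v (r - 2), v (r - 1)) := by
      intro h
      exact hx (v (r - 2)) (by rw [h]; exact Sym2.mem_iff.mpr (Or.inl rfl))
        (hviS (r - 2) (by omega) (by omega))
    rw [hφf]; simp only; rw [if_neg c1, if_neg c2]
  have hSide : ∀ e ∈ G.edgeSet, ∀ u ∈ e, (u ∉ S ∧ u ∈ φf e) ∨
      (∃ i, i < r ∧ u = v i ∧ v (if i = 1 ∨ i = r - 1 then 0 else i) ∈ φf e) := by
    intro e he u hu
    rcases hclassify e he with hE0 | ⟨j, hj, rfl⟩
    · left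
      refine ⟨hE0 u hu, ?_⟩
      rw [hφE0 e hE0]; exact hu
    · right
      rw [hcE] at hu
      rcases Sym2.mem_iff.mp hu with rfl | rfl
      · exact ⟨j, hj, rfl, hφc j hj j (Or.inl rfl)⟩
      · exact ⟨(j + 1) % r, Nat.mod_lt _ (by omega), rfl, hφc j hj _ (Or.inr rfl)⟩
  have hKey : ∀ e ∈ G.edgeSet, ∀ f ∈ G.edgeSet, ∀ u ∈ e, ∀ w ∈ f,
      ∃ u' ∈ φf e, ∃ w' ∈ φf f, G'.dist u' w' ≤ G.dist u w := by
    intro e he f hf u hu w hw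
    rcases hSide e he u hu with ⟨huS, huφ⟩ | ⟨i, hir, rfl, hmemi⟩ <;>
      rcases hSide f hf w hw with ⟨hwS, hwφ⟩ | ⟨m, hmr, rfl, hmemm⟩
    · exact ⟨u, huφ, w, hwφ, hM5 u w huS hwS⟩
    · refine ⟨u, huφ, _, hmemm, ?_⟩
      have t1 := hconn'.dist_triangle (u := u) (v := v 0)
        (w := v (if m = 1 ∨ m = r - 1 then 0 else m))
      have t2 := hM5 u (v 0) huS hv0S
      have t3 := hU1 0 (if m = 1 ∨ m = r - 1 then 0 else m) (Or.inl rfl) (hχsat m hmr)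
      have t4 : min (Nat.dist (0 - 1) ((if m = 1 ∨ m = r - 1 then 0 else m) - 1))
          ((r - 2) - Nat.dist (0 - 1) ((if m = 1 ∨ m = r - 1 then 0 else m) - 1))
          ≤ min m (r - m) := by
        simp only [Nat.dist]
        split_ifs <;> omega
      have t5 := hL2 u huS m hmr
      omega
    · refine ⟨_, hmemi, w, hwφ, ?_⟩
      have c1 : G'.dist (v (if i = 1 ∨ i = r - 1 then 0 else i)) w =
          G'.dist w (v (if i = 1 ∨ i = r - 1 then 0 else i)) := SimpleGraph.dist_comm
      have c2 : G.dist (v i) w = G.dist w (v i) := SimpleGraph.dist_comm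
      have t1 := hconn'.dist_triangle (u := w) (v := v 0)
        (w := v (if i = 1 ∨ i = r - 1 then 0 else i))
      have t2 := hM5 w (v 0) hwS hv0S
      have t3 := hU1 0 (if i = 1 ∨ i = r - 1 then 0 else i) (Or.inl rfl) (hχsat i hir)
      have t4 : min (Nat.dist (0 - 1) ((if i = 1 ∨ i = r - 1 then 0 else i) - 1))
          ((r - 2) - Nat.dist (0 - 1) ((if i = 1 ∨ i = r - 1 then 0 else i) - 1))
          ≤ min i (r - i) := by
        simp only [Nat.dist]
        split_ifs <;> omega
      have t5 := hL2 w hwS i hir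
      omega
    · refine ⟨_, hmemi, _, hmemm, ?_⟩
      have t3 := hU1 (if i = 1 ∨ i = r - 1 then 0 else i) (if m = 1 ∨ m = r - 1 then 0 else m)
        (hχsat i hir) (hχsat m hmr)
      have t4 : min (Nat.dist ((if i = 1 ∨ i = r - 1 then 0 else i) - 1)
            ((if m = 1 ∨ m = r - 1 then 0 else m) - 1))
          ((r - 2) - Nat.dist ((if i = 1 ∨ i = r - 1 then 0 else i) - 1)
            ((if m = 1 ∨ m = r - 1 then 0 else m) - 1))
          ≤ min (Nat.dist i m) (r - Nat.dist i m) := by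
        simp only [Nat.dist]
        split_ifs <;> omega
      have t5 := hL1 i m hir hmr
      omega
  -- eDist comparison
  have hED : ∀ e ∈ G.edgeSet, ∀ f ∈ G.edgeSet, eDist G' (φf e) (φf f) ≤ eDist G e f := by
    intro e he f hf
    by_cases hef : e = f
    · subst hef
      unfold eDist
      rw [if_pos rfl, if_pos rfl]
    · have hφef : φf e ≠ φf f := fun h => hef (by rw [← hψφ e he, ← hψφ f hf, h])
      unfold eDist
      rw [if_neg hef, if_neg hφef]
      have hne : {n : ℕ | ∃ u ∈ e, ∃ w ∈ f, G.dist u w = n}.Nonempty :=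
        ⟨G.dist (Quot.out e).1 (Quot.out f).1, (Quot.out e).1, Sym2.out_fst_mem e,
          (Quot.out f).1, Sym2.out_fst_mem f, rfl⟩
      obtain ⟨u, hu, w, hw, hd⟩ := Nat.sInf_mem hne
      obtain ⟨u', hu', w', hw', hle⟩ := hKey e he f hf u hu w hw
      have h1 : sInf {n : ℕ | ∃ a ∈ φf e, ∃ b ∈ φf f, G'.dist a b = n} ≤ G'.dist u' w' :=
        Nat.sInf_le ⟨u', hu', w', hw', rfl⟩
      omega
  have hne12 : cE 1 ≠ cE (r - 2) := by
    rw [hcE1, hcEr2]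
    exact hSym2ne (by omega) (by omega) (by omega) (by omega) (by omega)
  have hstrict : eDist G' (φf (cE 1)) (φf (cE (r - 2))) < eDist G (cE 1) (cE (r - 2)) := by
    have hφne : φf (cE 1) ≠ φf (cE (r - 2)) := by
      rw [hφ1, hφr2]
      exact hSym2ne (by omega) (by omega) (by omega) (by omega) (by omega)
    have hLHS : eDist G' (φf (cE 1)) (φf (cE (r - 2))) ≤ 1 := by
      unfold eDist
      rw [if_neg hφne]
      have h0 : sInf {n : ℕ | ∃ a ∈ φf (cE 1), ∃ b ∈ φf (cE (r - 2)), G'.dist a b = n} ≤ 0 :=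
        Nat.sInf_le ⟨v 0, by rw [hφ1]; exact Sym2.mem_iff.mpr (Or.inl rfl),
          v 0, by rw [hφr2]; exact Sym2.mem_iff.mpr (Or.inr rfl), SimpleGraph.dist_self⟩
      omega
    have hRHS : 2 ≤ eDist G (cE 1) (cE (r - 2)) := by
      unfold eDist
      rw [if_neg hne12]
      have hne' : {n : ℕ | ∃ u ∈ cE 1, ∃ w ∈ cE (r - 2), G.dist u w = n}.Nonempty :=
        ⟨G.dist (v 1) (v (r - 2)), v 1, by rw [hcE1]; exact Sym2.mem_iff.mpr (Or.inl rfl),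
          v (r - 2), by rw [hcEr2]; exact Sym2.mem_iff.mpr (Or.inl rfl), rfl⟩
      obtain ⟨u, hu, w, hw, hd⟩ := Nat.sInf_mem hne'
      rw [hcE1] at hu
      rw [hcEr2] at hw
      have hpos : 0 < G.dist u w := by
        rcases Sym2.mem_iff.mp hu with rfl | rfl <;> rcases Sym2.mem_iff.mp hw with rfl | rfl <;>
          exact hconn.pos_dist_of_ne (hvne (by omega) (by omega) (by omega))
      omega
    omega
  -- assemble the sums
  have hφ_memF : ∀ e ∈ G.edgeFinset, φf e ∈ G'.edgeFinset := by
    intro e he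
    rw [SimpleGraph.mem_edgeFinset] at he ⊢
    exact hφ_mem e he
  have hψ_memF : ∀ e ∈ G'.edgeFinset, ψf e ∈ G.edgeFinset := by
    intro e he
    rw [SimpleGraph.mem_edgeFinset] at he ⊢
    exact hψ_mem e he
  have hψφF : ∀ e ∈ G.edgeFinset, ψf (φf e) = e := fun e he =>
    hψφ e (SimpleGraph.mem_edgeFinset.mp he)
  have hφψF : ∀ e ∈ G'.edgeFinset, φf (ψf e) = e := fun e he =>
    hφψ e (SimpleGraph.mem_edgeFinset.mp he)
  have hreindex : ∑ e ∈ G.edgeFinset, ∑ f ∈ G.edgeFinset, eDist G' (φf e) (φf f)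
      = ∑ e ∈ G'.edgeFinset, ∑ f ∈ G'.edgeFinset, eDist G' e f := by
    refine Finset.sum_nbij' φf ψf hφ_memF hψ_memF hψφF hφψF ?_
    intro e he
    exact Finset.sum_nbij' φf ψf hφ_memF hψ_memF hψφF hφψF (fun f hf => rfl)
  have hrow_le : ∀ e ∈ G.edgeFinset,
      ∑ f ∈ G.edgeFinset, eDist G' (φf e) (φf f) ≤ ∑ f ∈ G.edgeFinset, eDist G e f := by
    intro e he
    exact Finset.sum_le_sum fun f hf =>
      hED e (SimpleGraph.mem_edgeFinset.mp he) f (SimpleGraph.mem_edgeFinset.mp hf)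
  have hm1 : cE 1 ∈ G.edgeFinset := SimpleGraph.mem_edgeFinset.mpr (hcE_mem 1 (by omega))
  have hm2 : cE (r - 2) ∈ G.edgeFinset := SimpleGraph.mem_edgeFinset.mpr (hcE_mem (r - 2) (by omega))
  have hcomm : ∀ (H : SimpleGraph V) (e f : Sym2 V), eDist H e f = eDist H f e := by
    intro H e f
    unfold eDist
    exact EWaux.eDist_comm H e f
  have hrow1 : ∑ f ∈ G.edgeFinset, eDist G' (φf (cE 1)) (φf f)
      < ∑ f ∈ G.edgeFinset, eDist G (cE 1) f :=
    Finset.sum_lt_sum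
      (fun f hf => hED _ (SimpleGraph.mem_edgeFinset.mp hm1) f (SimpleGraph.mem_edgeFinset.mp hf))
      ⟨cE (r - 2), hm2, hstrict⟩
  have hstrict2 : eDist G' (φf (cE (r - 2))) (φf (cE 1)) < eDist G (cE (r - 2)) (cE 1) := by
    rw [hcomm G' (φf (cE (r - 2))) (φf (cE 1)), hcomm G (cE (r - 2)) (cE 1)]
    exact hstrict
  have hrow2 : ∑ f ∈ G.edgeFinset, eDist G' (φf (cE (r - 2))) (φf f)
      < ∑ f ∈ G.edgeFinset, eDist G (cE (r - 2)) f :=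
    Finset.sum_lt_sum
      (fun f hf => hED _ (SimpleGraph.mem_edgeFinset.mp hm2) f (SimpleGraph.mem_edgeFinset.mp hf))
      ⟨cE 1, hm1, hstrict2⟩
  have hmain : (∑ e ∈ G.edgeFinset, ∑ f ∈ G.edgeFinset, eDist G' (φf e) (φf f)) + 2
      ≤ ∑ e ∈ G.edgeFinset, ∑ f ∈ G.edgeFinset, eDist G e f :=
    EWaux.two_strict_sum hrow_le hm1 hm2 hne12 hrow1 hrow2
  rw [hreindex] at hmain
  unfold edgeWiener
  have h2 : ((∑ e ∈ G'.edgeFinset, ∑ f ∈ G'.edgeFinset, eDist G' e f) + 2) / 2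
      = (∑ e ∈ G'.edgeFinset, ∑ f ∈ G'.edgeFinset, eDist G' e f) / 2 + 1 :=
    Nat.add_div_right _ (by norm_num)
  have h1 := Nat.div_le_div_right (c := 2) hmain
  omega
end
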